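/- The set Ξ = { ξ ∈ Δ^Ω : (1−λ)·f ≤ ξ ≤ ((1−α+λα)/(1−α))·f } equals the Minkowski combination λ·Q_CVaR + (1−λ)·{f}, where Q_CVaR = { ξ ∈ Δ^Ω : ξ ≤ f/(1−α) }, for any λ ∈ (0,1], α ∈ [0,1), and probability vector f on a finite set Ω. -/

import Mathlib

/-- The soft-robust ambiguity set `Ξ` equals the Minkowski combination
`λ·Q_CVaR + (1−λ)·{f}` of the CVaR dual set and the singleton `{f}`. -/
theorem stmt_7 {Ω : Type*} [Fintype Ω] [Nonempty Ω] (f : Ω → ℝ)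
    (hf0 : ∀ ω, 0 ≤ f ω) (hf1 : ∑ ω, f ω = 1)
    (α lam : ℝ) (hα0 : 0 ≤ α) (hα1 : α < 1) (hl0 : 0 < lam) (hl1 : lam ≤ 1) :
    {ξ : Ω → ℝ | (∀ ω, 0 ≤ ξ ω) ∧ (∑ ω, ξ ω = 1) ∧
        (∀ ω, (1 - lam) * f ω ≤ ξ ω ∧ ξ ω ≤ ((1 - α + lam * α) / (1 - α)) * f ω)}
    = {ξ : Ω → ℝ | ∃ q : Ω → ℝ, (∀ ω, 0 ≤ q ω) ∧ (∑ ω, q ω = 1) ∧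
        (∀ ω, q ω ≤ f ω / (1 - α)) ∧ ξ = fun ω => lam * q ω + (1 - lam) * f ω} := by
  have hα : (0:ℝ) < 1 - α := by linarith
  ext ξ
  simp only [Set.mem_setOf_eq]
  constructor
  · rintro ⟨h0, h1, h2⟩
    refine ⟨fun ω => (ξ ω - (1 - lam) * f ω) / lam, ?_, ?_, ?_, ?_⟩
    · intro ω
      exact div_nonneg (sub_nonneg.mpr (h2 ω).1) hl0.le
    · rw [← Finset.sum_div, Finset.sum_sub_distrib, ← Finset.mul_sum, hf1, h1]
      field_simp
      ring
    · intro ω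
      rw [div_le_div_iff₀ hl0 hα]
      have := (h2 ω).2
      have hfω := hf0 ω
      have : ξ ω * (1 - α) ≤ (1 - α + lam * α) * f ω := by
        rw [mul_comm]
        calc (1 - α) * ξ ω ≤ (1 - α) * (((1 - α + lam * α) / (1 - α)) * f ω) := by
              exact mul_le_mul_of_nonneg_left this hα.le
          _ = (1 - α + lam * α) * f ω := by field_simp
      nlinarith
    · funext ω
      field_simp
      ring
  · rintro ⟨q, hq0, hq1, hq2, rfl⟩
    refine ⟨fun ω => by simp only; nlinarith [hq0 ω, hf0 ω], ?_, fun ω => ⟨?_, ?_⟩⟩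
    · simp only [Finset.sum_add_distrib, ← Finset.mul_sum, hq1, hf1]; ring
    · simp only; nlinarith [mul_nonneg hl0.le (hq0 ω)]
    · have h : q ω * (1 - α) ≤ f ω := by
        rw [← le_div_iff₀ hα]; exact hq2 ω
      simp only
      rw [div_mul_eq_mul_div, le_div_iff₀ hα]
      have hfω := hf0 ω
      nlinarith [h, hl0.le]
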